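/- Let X be an m×m real symmetric matrix with eigenvalues λ₁ ≥ ⋯ ≥ λ_m, written as X = X₁ + X₂ with X₁ = U^T diag(λ₁,0,...,0) U for the orthogonalizing matrix U with first row u. Define λ₁*(M) = sqrt((λ₁(M)² + Tr(M²))/2). Then for every β ⊆ {1,...,m}, |λ₁*(X_β) - |λ₁| ∑_{k∈β} u_k²| ≤ sqrt(∑_{i=2}^m λ_i²). -/

import Mathlib

open Matrix

/-- The largest eigenvalue of a Hermitian real matrix. -/
noncomputable def lambdaMax {n : Type*} [Fintype n] [DecidableEq n]
    {A : Matrix n n ℝ} (hA : A.IsHermitian) : ℝ :=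
  ⨆ i, hA.eigenvalues i

/-- `λ₁*(A) = sqrt((λ₁(A)² + Tr(A²))/2)`. -/
noncomputable def lambdaStar {n : Type*} [Fintype n] [DecidableEq n]
    {A : Matrix n n ℝ} (hA : A.IsHermitian) : ℝ :=
  Real.sqrt ((lambdaMax hA ^ 2 + Matrix.trace (A * A)) / 2)

section Helpers

set_option linter.unusedSectionVars false

variable {n : Type*} [Fintype n] [DecidableEq n] {A B : Matrix n n ℝ}

private lemma sq_sum_helper {α : Type*} (s : Finset α) (c : ℝ) (x : α → ℝ) :
    ∑ j ∈ s, ∑ k ∈ s, c * (x j) * (x k) = c * (∑ j ∈ s, x j) ^ 2 :=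
  calc ∑ j ∈ s, ∑ k ∈ s, c * x j * x k = ∑ j ∈ s, (c * x j) * ∑ k ∈ s, x k := by
        exact Finset.sum_congr rfl fun j _ => by rw [Finset.mul_sum]
    _ = (∑ j ∈ s, c * x j) * ∑ k ∈ s, x k := by rw [Finset.sum_mul]
    _ = c * (∑ j ∈ s, x j) ^ 2 := by rw [← Finset.mul_sum]; ring

private lemma entry_eq (hA : A.IsHermitian) (j k : n) :
    A j k = ∑ i, hA.eigenvalues i * hA.eigenvectorBasis i j * hA.eigenvectorBasis i k := by
  conv_lhs => rw [hA.spectral_theorem]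
  simp [Matrix.mul_apply, Matrix.diagonal, Matrix.IsHermitian.eigenvectorUnitary_apply,
    mul_comm, mul_assoc, mul_left_comm]

private lemma col_ortho (hA : A.IsHermitian) (i i' : n) :
    (∑ j, hA.eigenvectorBasis i j * hA.eigenvectorBasis i' j) = if i = i' then 1 else 0 := by
  have h : star (hA.eigenvectorUnitary : Matrix n n ℝ) * (hA.eigenvectorUnitary : Matrix n n ℝ) = 1 :=
    Unitary.star_mul_self_of_mem hA.eigenvectorUnitary.2
  have h2 := congrFun (congrFun h i) i'
  simp only [Matrix.mul_apply, Matrix.IsHermitian.eigenvectorUnitary_apply, Matrix.one_apply,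
    Matrix.star_apply, star_trivial] at h2
  rw [← h2]

private lemma quad_eq (hA : A.IsHermitian) (v : n → ℝ) :
    v ⬝ᵥ A *ᵥ v = ∑ i, hA.eigenvalues i * ((fun k => hA.eigenvectorBasis i k) ⬝ᵥ v) ^ 2 := by
  have key : ∀ j k, v j * A j k * v k
      = ∑ i, hA.eigenvalues i * (hA.eigenvectorBasis i j * v j) * (hA.eigenvectorBasis i k * v k) := by
    intro j k
    rw [show v j * A j k * v k = A j k * (v j * v k) by ring, entry_eq hA, Finset.sum_mul]
    exact Finset.sum_congr rfl fun i _ => by ring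
  calc v ⬝ᵥ A *ᵥ v = ∑ j, ∑ k, v j * A j k * v k := by
        simp [dotProduct, mulVec, Finset.mul_sum, mul_assoc]
    _ = ∑ j, ∑ k, ∑ i, hA.eigenvalues i * (hA.eigenvectorBasis i j * v j) * (hA.eigenvectorBasis i k * v k) := by
        simp only [key]
    _ = ∑ i, ∑ j, ∑ k, hA.eigenvalues i * (hA.eigenvectorBasis i j * v j) * (hA.eigenvectorBasis i k * v k) := by
        exact (Finset.sum_congr rfl fun j _ => Finset.sum_comm).trans Finset.sum_comm
    _ = ∑ i, hA.eigenvalues i * ((fun k => hA.eigenvectorBasis i k) ⬝ᵥ v) ^ 2 := by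
        refine Finset.sum_congr rfl fun i _ => ?_
        simpa [dotProduct] using
          sq_sum_helper Finset.univ (hA.eigenvalues i) (fun j => hA.eigenvectorBasis i j * v j)

/-- Rayleigh upper bound. -/
private lemma rayleigh_le [Nonempty n] (hA : A.IsHermitian) (v : n → ℝ) :
    v ⬝ᵥ A *ᵥ v ≤ lambdaMax hA * (v ⬝ᵥ v) := by
  have hnorm : v ⬝ᵥ v = ∑ i, ((fun k => hA.eigenvectorBasis i k) ⬝ᵥ v) ^ 2 := by
    calc v ⬝ᵥ v = ∑ j, ∑ k, (if j = k then (1:ℝ) else 0) * (v j * v k) := by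
          simp [dotProduct, Finset.sum_ite_eq, mul_comm, sq]
      _ = ∑ j, ∑ k, (∑ i, hA.eigenvectorBasis i j * hA.eigenvectorBasis i k) * (v j * v k) := by
          have o : ∀ j k : n, (∑ i, hA.eigenvectorBasis i j * hA.eigenvectorBasis i k)
              = if j = k then (1:ℝ) else 0 := by
            intro j k
            have h : (hA.eigenvectorUnitary : Matrix n n ℝ) *
                star (hA.eigenvectorUnitary : Matrix n n ℝ) = 1 :=
              Unitary.mul_star_self_of_mem hA.eigenvectorUnitary.2
            have h2 := congrFun (congrFun h j) k
            simp only [Matrix.mul_apply, Matrix.IsHermitian.eigenvectorUnitary_apply,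
              Matrix.one_apply, Matrix.star_apply, star_trivial] at h2
            simpa using h2
          simp only [o]
      _ = ∑ j, ∑ k, ∑ i, (1:ℝ) * (hA.eigenvectorBasis i j * v j) * (hA.eigenvectorBasis i k * v k) := by
          refine Finset.sum_congr rfl fun j _ => Finset.sum_congr rfl fun k _ => ?_
          rw [Finset.sum_mul]
          exact Finset.sum_congr rfl fun i _ => by ring
      _ = ∑ i, ∑ j, ∑ k, (1:ℝ) * (hA.eigenvectorBasis i j * v j) * (hA.eigenvectorBasis i k * v k) := by
          exact (Finset.sum_congr rfl fun j _ => Finset.sum_comm).trans Finset.sum_comm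
      _ = ∑ i, ((fun k => hA.eigenvectorBasis i k) ⬝ᵥ v) ^ 2 := by
          refine Finset.sum_congr rfl fun i _ => ?_
          simpa [dotProduct] using
            sq_sum_helper Finset.univ 1 (fun j => hA.eigenvectorBasis i j * v j)
  rw [quad_eq hA v, hnorm, Finset.mul_sum]
  refine Finset.sum_le_sum fun i _ => ?_
  have h1 : hA.eigenvalues i ≤ lambdaMax hA :=
    le_ciSup (Set.Finite.bddAbove (Set.finite_range _)) i
  exact mul_le_mul_of_nonneg_right h1 (sq_nonneg _)

/-- The maximum eigenvalue is attained by a unit vector. -/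
private lemma exists_unit_vec [Nonempty n] (hA : A.IsHermitian) :
    ∃ v : n → ℝ, v ⬝ᵥ v = 1 ∧ v ⬝ᵥ A *ᵥ v = lambdaMax hA := by
  obtain ⟨i0, hi0⟩ := Finite.exists_max hA.eigenvalues
  have hmax : lambdaMax hA = hA.eigenvalues i0 :=
    le_antisymm (ciSup_le hi0) (le_ciSup (Set.Finite.bddAbove (Set.finite_range _)) i0)
  refine ⟨fun k => hA.eigenvectorBasis i0 k, ?_, ?_⟩
  · have := col_ortho hA i0 i0
    simpa [dotProduct] using this
  · rw [quad_eq hA]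
    have : ∀ i, ((fun k => hA.eigenvectorBasis i k) ⬝ᵥ fun k => hA.eigenvectorBasis i0 k)
        = if i = i0 then (1:ℝ) else 0 := fun i => by
      simpa [dotProduct] using col_ortho hA i i0
    simp only [this, hmax]
    rw [Finset.sum_eq_single i0] <;> simp +contextual

private lemma trace_sq_eq (hA : A.IsHermitian) :
    Matrix.trace (A * A) = ∑ j, ∑ k, (A j k) ^ 2 := by
  have hsym : ∀ j k : n, A k j = A j k := fun j k => ((hA.apply k j).symm.trans (by simp))
  simp only [Matrix.trace, Matrix.diag, Matrix.mul_apply]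
  exact Finset.sum_congr rfl fun j _ => Finset.sum_congr rfl fun k _ => by rw [hsym j k, sq]

private lemma trace_sq_nonneg (hA : A.IsHermitian) : 0 ≤ Matrix.trace (A * A) := by
  rw [trace_sq_eq hA]
  exact Finset.sum_nonneg fun j _ => Finset.sum_nonneg fun k _ => sq_nonneg _

/-- Cauchy–Schwarz for a quadratic form over a unit vector. -/
private lemma quad_sq_le_trace (hA : A.IsHermitian) {v : n → ℝ} (hv : v ⬝ᵥ v = 1) :
    (v ⬝ᵥ A *ᵥ v) ^ 2 ≤ Matrix.trace (A * A) := by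
  have h1 : v ⬝ᵥ A *ᵥ v = ∑ p : n × n, A p.1 p.2 * (v p.1 * v p.2) := by
    rw [Fintype.sum_prod_type]
    simp only [dotProduct, mulVec, Finset.mul_sum]
    exact Finset.sum_congr rfl fun j _ => Finset.sum_congr rfl fun k _ => by ring
  have h2 := Finset.sum_mul_sq_le_sq_mul_sq Finset.univ
    (fun p : n × n => A p.1 p.2) (fun p : n × n => v p.1 * v p.2)
  have h3 : ∑ p : n × n, (v p.1 * v p.2) ^ 2 = 1 := by
    rw [Fintype.sum_prod_type]
    have : ∀ j : n, ∑ k : n, (v j * v k)^2 = v j ^2 * ∑ k, v k ^2 := by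
      intro j; rw [Finset.mul_sum]; exact Finset.sum_congr rfl fun k _ => by ring
    simp only [this, ← Finset.sum_mul]
    have hv' : ∑ k : n, v k ^ 2 = 1 := by simpa [dotProduct, sq] using hv
    rw [hv']; simp
  have h4 : ∑ p : n × n, (A p.1 p.2) ^ 2 = Matrix.trace (A * A) := by
    rw [trace_sq_eq hA, Fintype.sum_prod_type]
  rw [h1]
  calc (∑ p : n × n, A p.1 p.2 * (v p.1 * v p.2)) ^ 2
      ≤ (∑ p : n × n, (A p.1 p.2) ^ 2) * ∑ p : n × n, (v p.1 * v p.2) ^ 2 := h2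
    _ = Matrix.trace (A * A) := by rw [h3, h4, mul_one]

private lemma abs_quad_le_sqrt_trace (hA : A.IsHermitian) {v : n → ℝ} (hv : v ⬝ᵥ v = 1) :
    |v ⬝ᵥ A *ᵥ v| ≤ Real.sqrt (Matrix.trace (A * A)) := by
  have := Real.sqrt_le_sqrt (quad_sq_le_trace hA hv)
  rwa [Real.sqrt_sq_eq_abs] at this

/-- Weyl-type inequality with Frobenius norm. -/
private lemma lambdaMax_le_weyl [Nonempty n] (hA : A.IsHermitian) (hB : B.IsHermitian) :
    lambdaMax hA ≤ lambdaMax hB + Real.sqrt (Matrix.trace ((A - B) * (A - B))) := by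
  obtain ⟨v, hv1, hv2⟩ := exists_unit_vec hA
  have hsplit : v ⬝ᵥ A *ᵥ v = v ⬝ᵥ B *ᵥ v + v ⬝ᵥ (A - B) *ᵥ v := by
    rw [Matrix.sub_mulVec, dotProduct_sub]; ring
  have h1 : v ⬝ᵥ B *ᵥ v ≤ lambdaMax hB := by
    have := rayleigh_le hB v; rwa [hv1, mul_one] at this
  have h2 : v ⬝ᵥ (A - B) *ᵥ v ≤ Real.sqrt (Matrix.trace ((A - B) * (A - B))) :=
    (le_abs_self _).trans (abs_quad_le_sqrt_trace (hA.sub hB) hv1)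
  rw [← hv2, hsplit]
  exact add_le_add h1 h2

private lemma abs_lambdaMax_le [Nonempty n] (hA : A.IsHermitian) :
    |lambdaMax hA| ≤ Real.sqrt (Matrix.trace (A * A)) := by
  obtain ⟨v, hv1, hv2⟩ := exists_unit_vec hA
  rw [← hv2]
  exact abs_quad_le_sqrt_trace hA hv1

/-- Frobenius triangle inequality in trace form. -/
private lemma frob_triangle (hA : A.IsHermitian) (hB : B.IsHermitian) :
    Real.sqrt (Matrix.trace (A * A)) ≤ Real.sqrt (Matrix.trace (B * B)) +
      Real.sqrt (Matrix.trace ((A - B) * (A - B))) := by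
  set b := Real.sqrt (Matrix.trace (B * B)) with hbdef
  set t := Real.sqrt (Matrix.trace ((A - B) * (A - B))) with htdef
  have hb0 : 0 ≤ b := Real.sqrt_nonneg _
  have ht0 : 0 ≤ t := Real.sqrt_nonneg _
  have hb : Matrix.trace (B * B) = b ^ 2 := (Real.sq_sqrt (trace_sq_nonneg hB)).symm
  have ht : Matrix.trace ((A - B) * (A - B)) = t ^ 2 :=
    (Real.sq_sqrt (trace_sq_nonneg (hA.sub hB))).symm
  have key : Matrix.trace (A * A) ≤ (b + t) ^ 2 := by
    have hcs : ∑ p : n × n, (B p.1 p.2) * ((A - B) p.1 p.2)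
        ≤ Real.sqrt (∑ p : n × n, (B p.1 p.2) ^ 2) *
          Real.sqrt (∑ p : n × n, ((A - B) p.1 p.2) ^ 2) :=
      Real.sum_mul_le_sqrt_mul_sqrt _ _ _
    have hBt : ∑ p : n × n, (B p.1 p.2) ^ 2 = Matrix.trace (B * B) := by
      rw [trace_sq_eq hB, Fintype.sum_prod_type]
    have hEt : ∑ p : n × n, ((A - B) p.1 p.2) ^ 2 = Matrix.trace ((A - B) * (A - B)) := by
      rw [trace_sq_eq (hA.sub hB), Fintype.sum_prod_type]
    have hAt : Matrix.trace (A * A) = ∑ p : n × n, (A p.1 p.2) ^ 2 := by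
      rw [trace_sq_eq hA, Fintype.sum_prod_type]
    have hexp : ∑ p : n × n, (A p.1 p.2) ^ 2
        = ∑ p : n × n, (B p.1 p.2) ^ 2 + 2 * ∑ p : n × n, (B p.1 p.2) * ((A - B) p.1 p.2)
          + ∑ p : n × n, ((A - B) p.1 p.2) ^ 2 := by
      calc ∑ p : n × n, (A p.1 p.2) ^ 2
          = ∑ p : n × n, ((B p.1 p.2) ^ 2 + 2 * ((B p.1 p.2) * ((A - B) p.1 p.2))
            + ((A - B) p.1 p.2) ^ 2) :=
            Finset.sum_congr rfl fun p _ => by simp only [Matrix.sub_apply]; ring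
        _ = _ := by rw [Finset.sum_add_distrib, Finset.sum_add_distrib, ← Finset.mul_sum]
    rw [hAt, hexp, hBt, hEt, hb, ht]
    rw [hBt, hEt, ← hbdef, ← htdef] at hcs
    nlinarith [hcs]
  calc Real.sqrt (Matrix.trace (A * A)) ≤ Real.sqrt ((b + t) ^ 2) := Real.sqrt_le_sqrt key
    _ = b + t := Real.sqrt_sq (by linarith)

/-- One-sided Lipschitz bound for `lambdaStar`. -/
private lemma lambdaStar_lip [Nonempty n] (hA : A.IsHermitian) (hB : B.IsHermitian) :
    lambdaStar hA ≤ lambdaStar hB + Real.sqrt (Matrix.trace ((A - B) * (A - B))) := by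
  set t := Real.sqrt (Matrix.trace ((A - B) * (A - B))) with htdef
  have ht0 : 0 ≤ t := Real.sqrt_nonneg _
  set a := lambdaMax hB
  set a' := lambdaMax hA
  set b := Real.sqrt (Matrix.trace (B * B)) with hbdef
  set b' := Real.sqrt (Matrix.trace (A * A)) with hb'def
  have hb0 : 0 ≤ b := Real.sqrt_nonneg _
  have hb'0 : 0 ≤ b' := Real.sqrt_nonneg _
  have hbB : Matrix.trace (B * B) = b ^ 2 := (Real.sq_sqrt (trace_sq_nonneg hB)).symm
  have hb'A : Matrix.trace (A * A) = b' ^ 2 := (Real.sq_sqrt (trace_sq_nonneg hA)).symm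
  have ha'b' : |a'| ≤ b' := abs_lambdaMax_le hA
  have hab : |a| ≤ b := abs_lambdaMax_le hB
  have hW1 : a' ≤ a + t := lambdaMax_le_weyl hA hB
  have hW2 : a ≤ a' + t := by
    have h := lambdaMax_le_weyl hB hA
    have : (B - A) * (B - A) = (A - B) * (A - B) := by
      rw [show B - A = -(A - B) from (neg_sub A B).symm, neg_mul_neg]
    rwa [this, ← htdef] at h
  have hbb' : b' ≤ b + t := frob_triangle hA hB
  -- now pure real arithmetic
  have hS0 : (0:ℝ) ≤ (a ^ 2 + b ^ 2) / 2 := by positivity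
  set S := Real.sqrt ((a ^ 2 + b ^ 2) / 2) with hSdef
  have hSnn : 0 ≤ S := Real.sqrt_nonneg _
  have hS2 : S ^ 2 = (a ^ 2 + b ^ 2) / 2 := Real.sq_sqrt hS0
  have hSge : (|a| + b) / 2 ≤ S := by
    rw [hSdef]
    rw [show (|a| + b) / 2 = Real.sqrt (((|a| + b) / 2) ^ 2) from
      (Real.sqrt_sq (by positivity)).symm]
    apply Real.sqrt_le_sqrt
    nlinarith [sq_abs a, sq_nonneg (|a| - b)]
  have hkey : (a' ^ 2 + b' ^ 2) / 2 ≤ (S + t) ^ 2 := by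
    have h1 : a' ^ 2 ≤ (|a| + t) ^ 2 := by
      have : |a'| ≤ |a| + t := by
        cases abs_cases a' with
        | inl h => rw [h.1]; calc a' ≤ a + t := hW1
                                _ ≤ |a| + t := by linarith [le_abs_self a]
        | inr h => rw [h.1]
                   calc -a' ≤ -a + t + t - t := by linarith
                     _ ≤ |a| + t := by linarith [neg_abs_le a, neg_le_abs a]
      calc a' ^ 2 = |a'| ^ 2 := (sq_abs a').symm
        _ ≤ (|a| + t) ^ 2 := by nlinarith [abs_nonneg a', abs_nonneg a]
    have h2 : b' ^ 2 ≤ (b + t) ^ 2 := by nlinarith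
    nlinarith [h1, h2, hS2, sq_abs a, mul_le_mul_of_nonneg_left hSge ht0, hSnn, ht0, abs_nonneg a]
  have : lambdaStar hA = Real.sqrt ((a' ^ 2 + b' ^ 2) / 2) := by
    rw [lambdaStar, hb'A]
  rw [this, show lambdaStar hB = S by rw [lambdaStar, hbB]]
  calc Real.sqrt ((a' ^ 2 + b' ^ 2) / 2) ≤ Real.sqrt ((S + t) ^ 2) := Real.sqrt_le_sqrt hkey
    _ = S + t := Real.sqrt_sq (by linarith)

end Helpers

theorem stmt_12 (m : ℕ) (hm : 1 ≤ m) (lam : Fin m → ℝ)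
    (hlam : ∀ i j : Fin m, i ≤ j → lam j ≤ lam i)
    (U : Matrix (Fin m) (Fin m) ℝ) (hU : Uᵀ * U = 1)
    (X : Matrix (Fin m) (Fin m) ℝ) (hXh : X.IsHermitian)
    (hX : X = Uᵀ * Matrix.diagonal lam * U) :
    ∀ β : Finset (Fin m),
      |lambdaStar (hXh.submatrix (fun i : β => (i : Fin m))) -
          |lam ⟨0, hm⟩| * ∑ k ∈ β, (U ⟨0, hm⟩ k) ^ 2| ≤
        Real.sqrt (∑ i ∈ Finset.Ioi (⟨0, hm⟩ : Fin m), lam i ^ 2) := by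
  intro β
  set z : Fin m := ⟨0, hm⟩ with hzdef
  have hzmin : ∀ i : Fin m, z ≤ i := fun i => by simp [Fin.le_def, hzdef]
  set f : β → Fin m := fun i : β => (i : Fin m) with hfdef
  set s : ℝ := ∑ k ∈ β, (U z k) ^ 2 with hsdef
  have hs0 : 0 ≤ s := Finset.sum_nonneg fun k _ => sq_nonneg _
  have hUU : U * Uᵀ = 1 := mul_eq_one_comm.mp hU
  have hsum1 : ∑ k : Fin m, (U z k) ^ 2 = 1 := by
    have h2 := congrFun (congrFun hUU z) z
    simp only [Matrix.mul_apply, Matrix.transpose_apply, Matrix.one_apply_eq] at h2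
    rw [← h2]
    exact Finset.sum_congr rfl fun k _ => (sq (U z k)).symm ▸ rfl
  have hs1 : s ≤ 1 := by
    rw [hsdef, ← hsum1]
    exact Finset.sum_le_sum_of_subset_of_nonneg (Finset.subset_univ β)
      (fun k _ _ => sq_nonneg _)
  set d1 : Fin m → ℝ := fun i => if i = z then lam i else 0 with hd1def
  set d2 : Fin m → ℝ := fun i => if i = z then 0 else lam i with hd2def
  set X1 : Matrix (Fin m) (Fin m) ℝ := Uᵀ * Matrix.diagonal d1 * U with hX1def
  set X2 : Matrix (Fin m) (Fin m) ℝ := Uᵀ * Matrix.diagonal d2 * U with hX2def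
  have hct : (Uᵀ)ᴴ = U := by
    rw [Matrix.conjTranspose_eq_transpose_of_trivial, Matrix.transpose_transpose]
  have hherm : ∀ d : Fin m → ℝ, (Uᵀ * Matrix.diagonal d * U).IsHermitian := by
    intro d
    have h := Matrix.isHermitian_mul_mul_conjTranspose Uᵀ (Matrix.isHermitian_diagonal d)
    rwa [hct] at h
  have hX1h : X1.IsHermitian := hherm d1
  have hX2h : X2.IsHermitian := hherm d2
  have hsplit : X = X1 + X2 := by
    rw [hX, hX1def, hX2def, ← Matrix.add_mul, ← Matrix.mul_add, Matrix.diagonal_add]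
    rw [show (fun i => d1 i + d2 i) = lam from funext fun i => by
      by_cases hi : i = z <;> simp [hd1def, hd2def, hi]]
  have hX1entry : ∀ j k : Fin m, X1 j k = lam z * U z j * U z k := by
    intro j k
    rw [hX1def]
    rw [Matrix.mul_apply]
    have : ∀ b, (Uᵀ * Matrix.diagonal d1) j b * U b k
        = (if b = z then lam z * U z j * U z k else 0) := by
      intro b
      rw [Matrix.mul_diagonal, Matrix.transpose_apply, hd1def]
      by_cases hb : b = z
      · subst hb; simp only [eq_self_iff_true, if_true]; ring
      · simp [hb]
    rw [Finset.sum_congr rfl fun b _ => this b, Finset.sum_ite_eq' Finset.univ z]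
    simp
  -- trace of X2 * X2
  have htrX2 : Matrix.trace (X2 * X2) = ∑ i ∈ Finset.Ioi z, lam i ^ 2 := by
    have e1 : X2 * X2 = Uᵀ * ((Matrix.diagonal d2 * Matrix.diagonal d2) * U) := by
      rw [hX2def]
      calc (Uᵀ * Matrix.diagonal d2 * U) * (Uᵀ * Matrix.diagonal d2 * U)
          = Uᵀ * Matrix.diagonal d2 * ((U * Uᵀ) * (Matrix.diagonal d2 * U)) := by
            simp only [Matrix.mul_assoc]
        _ = Uᵀ * ((Matrix.diagonal d2 * Matrix.diagonal d2) * U) := by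
            rw [hUU, Matrix.one_mul]; simp only [Matrix.mul_assoc]
    rw [e1, Matrix.trace_mul_comm, Matrix.mul_assoc, hUU, Matrix.mul_one,
      Matrix.diagonal_mul_diagonal, Matrix.trace_diagonal]
    have : ∀ i : Fin m, d2 i * d2 i = if i ∈ Finset.Ioi z then lam i ^ 2 else 0 := by
      intro i
      by_cases hi : i = z
      · simp [hd2def, hi, Finset.mem_Ioi]
      · have hzi : z < i := lt_of_le_of_ne (hzmin i) (Ne.symm hi)
        simp [hd2def, hi, Finset.mem_Ioi, hzi, sq]
    rw [Finset.sum_congr rfl fun i _ => this i, Finset.sum_ite_mem, Finset.univ_inter]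
  -- submatrices
  have hd : X.submatrix f f - X1.submatrix f f = X2.submatrix f f := by
    ext j k
    simp [Matrix.submatrix_apply, hsplit, Matrix.add_apply, Matrix.sub_apply]
  have htrA2 : Matrix.trace ((X2.submatrix f f) * (X2.submatrix f f))
      ≤ ∑ i ∈ Finset.Ioi z, lam i ^ 2 := by
    rw [trace_sq_eq (hX2h.submatrix f), ← htrX2, trace_sq_eq hX2h]
    calc ∑ j : β, ∑ k : β, ((X2.submatrix f f) j k) ^ 2
        = ∑ j : β, ∑ k ∈ β, (X2 (↑j) k) ^ 2 := by
          refine Finset.sum_congr rfl fun j _ => ?_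
          simp only [Matrix.submatrix_apply, hfdef]
          exact Finset.sum_coe_sort β (fun k => (X2 (↑j) k) ^ 2)
      _ = ∑ j ∈ β, ∑ k ∈ β, (X2 j k) ^ 2 :=
          Finset.sum_coe_sort β (fun j => ∑ k ∈ β, (X2 j k) ^ 2)
      _ ≤ ∑ j ∈ β, ∑ k : Fin m, (X2 j k) ^ 2 :=
          Finset.sum_le_sum fun j _ => Finset.sum_le_sum_of_subset_of_nonneg
            (Finset.subset_univ β) (fun k _ _ => sq_nonneg _)
      _ ≤ ∑ j : Fin m, ∑ k : Fin m, (X2 j k) ^ 2 :=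
          Finset.sum_le_sum_of_subset_of_nonneg (Finset.subset_univ β)
            (fun j _ _ => Finset.sum_nonneg fun k _ => sq_nonneg _)
  rcases isEmpty_or_nonempty β with hempty | hne
  · -- β is empty
    have hβ : β = ∅ := Finset.isEmpty_coe_sort.mp hempty
    have h0 : lambdaStar (hXh.submatrix f) = 0 := by
      rw [lambdaStar]
      have h1 : lambdaMax (hXh.submatrix f) = 0 := Real.iSup_of_isEmpty _
      have h2 : Matrix.trace ((X.submatrix f f) * (X.submatrix f f)) = 0 := by
        simp [Matrix.trace, Finset.univ_eq_empty]
      rw [h1, h2]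
      norm_num
    have hs00 : s = 0 := by rw [hsdef, hβ]; simp
    rw [h0, hs00]
    simpa using Real.sqrt_nonneg (∑ i ∈ Finset.Ioi z, lam i ^ 2)
  · -- β is nonempty
    set σ := lambdaStar (hXh.submatrix f) with hσdef
    set σ1 := lambdaStar (hX1h.submatrix f) with hσ1def
    set t := Real.sqrt (∑ i ∈ Finset.Ioi z, lam i ^ 2) with htdef
    have ht0 : 0 ≤ t := Real.sqrt_nonneg _
    have htr' : Real.sqrt (Matrix.trace ((X.submatrix f f - X1.submatrix f f) *
        (X.submatrix f f - X1.submatrix f f))) ≤ t := by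
      rw [hd, htdef]; exact Real.sqrt_le_sqrt htrA2
    have hlip1 : σ ≤ σ1 + t := by
      have h := lambdaStar_lip (hXh.submatrix f) (hX1h.submatrix f)
      exact h.trans (by linarith [htr'])
    have hlip2 : σ1 ≤ σ + t := by
      have h := lambdaStar_lip (hX1h.submatrix f) (hXh.submatrix f)
      have e : (X1.submatrix f f - X.submatrix f f) * (X1.submatrix f f - X.submatrix f f)
          = (X.submatrix f f - X1.submatrix f f) * (X.submatrix f f - X1.submatrix f f) := by
        rw [show X1.submatrix f f - X.submatrix f f
          = -(X.submatrix f f - X1.submatrix f f) from (neg_sub _ _).symm, neg_mul_neg]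
      rw [e] at h
      exact h.trans (by linarith [htr'])
    have hσ0 : 0 ≤ σ := by rw [hσdef, lambdaStar]; exact Real.sqrt_nonneg _
    set w : β → ℝ := fun j => U z (↑j) with hwdef
    have hww : w ⬝ᵥ w = s := by
      rw [hsdef, ← Finset.sum_coe_sort β (fun k => U z k ^ 2)]
      simp [dotProduct, hwdef, pow_two]
    have hquad : ∀ v : β → ℝ, v ⬝ᵥ (X1.submatrix f f) *ᵥ v = lam z * (w ⬝ᵥ v) ^ 2 := by
      intro v
      have hterm : ∀ j k : β, v j * (X1.submatrix f f) j k * v k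
          = lam z * (w j * v j) * (w k * v k) := by
        intro j k
        simp only [Matrix.submatrix_apply, hfdef, hwdef]
        rw [hX1entry]; ring
      calc v ⬝ᵥ (X1.submatrix f f) *ᵥ v
          = ∑ j : β, ∑ k : β, v j * (X1.submatrix f f) j k * v k := by
            simp [dotProduct, Matrix.mulVec, Finset.mul_sum, mul_assoc]
        _ = ∑ j : β, ∑ k : β, lam z * (w j * v j) * (w k * v k) := by
            exact Finset.sum_congr rfl fun j _ => Finset.sum_congr rfl fun k _ => hterm j k
        _ = lam z * (w ⬝ᵥ v) ^ 2 := by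
            simpa [dotProduct] using
              sq_sum_helper Finset.univ (lam z) (fun j : β => w j * v j)
    have hCS : ∀ v : β → ℝ, v ⬝ᵥ v = 1 → (w ⬝ᵥ v) ^ 2 ≤ s := by
      intro v hv
      have h := Finset.sum_mul_sq_le_sq_mul_sq Finset.univ w v
      have h1 : ∑ j : β, w j ^ 2 = s := by
        rw [← hww]; simp [dotProduct, pow_two]
      have h2 : ∑ j : β, v j ^ 2 = 1 := by
        rw [← hv]; simp [dotProduct, pow_two]
      calc (w ⬝ᵥ v) ^ 2 = (∑ j : β, w j * v j) ^ 2 := by simp [dotProduct]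
        _ ≤ (∑ j : β, w j ^ 2) * ∑ j : β, v j ^ 2 := h
        _ = s := by rw [h1, h2, mul_one]
    have htrA1 : Matrix.trace ((X1.submatrix f f) * (X1.submatrix f f)) = (lam z) ^ 2 * s ^ 2 := by
      rw [trace_sq_eq (hX1h.submatrix f)]
      calc ∑ j : β, ∑ k : β, ((X1.submatrix f f) j k) ^ 2
          = ∑ j : β, ∑ k : β, (lam z) ^ 2 * ((U z (↑j)) ^ 2) * ((U z (↑k)) ^ 2) := by
            refine Finset.sum_congr rfl fun j _ => Finset.sum_congr rfl fun k _ => ?_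
            simp only [Matrix.submatrix_apply, hfdef]
            rw [hX1entry]; ring
        _ = (lam z) ^ 2 * (∑ j : β, (U z (↑j)) ^ 2) ^ 2 :=
            sq_sum_helper Finset.univ ((lam z) ^ 2) (fun j : β => (U z (↑j)) ^ 2)
        _ = (lam z) ^ 2 * s ^ 2 := by
            rw [Finset.sum_coe_sort β (fun k => U z k ^ 2), ← hsdef]
    obtain ⟨v0, hv01, hv02⟩ := exists_unit_vec (hX1h.submatrix f)
    have hmaxabs : |lambdaMax (hX1h.submatrix f)| ≤ |lam z| * s := by
      rw [← hv02, hquad v0, abs_mul, abs_of_nonneg (sq_nonneg (w ⬝ᵥ v0))]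
      exact mul_le_mul_of_nonneg_left (hCS v0 hv01) (abs_nonneg _)
    rcases le_or_gt 0 (lam z) with hLpos | hLneg
    · -- λ₁ ≥ 0 : lambdaStar of X1-submatrix is exactly |λ₁| s
      have hmaxeq : lambdaMax (hX1h.submatrix f) = lam z * s := by
        apply le_antisymm
        · rw [← hv02, hquad v0]
          exact mul_le_mul_of_nonneg_left (hCS v0 hv01) hLpos
        · rcases eq_or_lt_of_le hs0 with hs | hs
          · rw [← hs, mul_zero, ← hv02, hquad v0]
            exact mul_nonneg hLpos (sq_nonneg _)
          · have hr := rayleigh_le (hX1h.submatrix f) w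
            rw [hquad w, hww] at hr
            nlinarith [hr, hs]
      have hσ1 : σ1 = |lam z| * s := by
        rw [hσ1def, lambdaStar, hmaxeq, htrA1, abs_of_nonneg hLpos]
        rw [show ((lam z * s) ^ 2 + (lam z) ^ 2 * s ^ 2) / 2 = (lam z * s) ^ 2 by ring]
        exact Real.sqrt_sq (mul_nonneg hLpos hs0)
      rw [abs_sub_le_iff]
      exact ⟨by linarith [hlip1, hσ1], by linarith [hlip2, hσ1]⟩
    · -- λ₁ < 0
      have hσ1le : σ1 ≤ |lam z| * s := by
        rw [hσ1def, lambdaStar, htrA1]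
        have hsq : (lambdaMax (hX1h.submatrix f)) ^ 2 ≤ (|lam z| * s) ^ 2 := by
          have h := pow_le_pow_left₀ (abs_nonneg (lambdaMax (hX1h.submatrix f))) hmaxabs 2
          rwa [sq_abs] at h
        calc Real.sqrt (((lambdaMax (hX1h.submatrix f)) ^ 2 + (lam z) ^ 2 * s ^ 2) / 2)
            ≤ Real.sqrt ((|lam z| * s) ^ 2) := by
              apply Real.sqrt_le_sqrt
              nlinarith [hsq, sq_abs (lam z)]
          _ = |lam z| * s := Real.sqrt_sq (mul_nonneg (abs_nonneg _) hs0)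
      rw [abs_sub_le_iff]
      refine ⟨by linarith [hlip1, hσ1le], ?_⟩
      by_cases hm2 : 2 ≤ m
      · have hi1 : (⟨1, hm2⟩ : Fin m) ∈ Finset.Ioi z := by
          simp [Finset.mem_Ioi, Fin.lt_def, hzdef]
        have hLle : lam ⟨1, hm2⟩ ≤ lam z := hlam z ⟨1, hm2⟩ (hzmin _)
        have habs : |lam z| ≤ |lam ⟨1, hm2⟩| := by
          rw [abs_of_neg hLneg, abs_of_neg (lt_of_le_of_lt hLle hLneg)]
          linarith
        have hsq2 : (lam z) ^ 2 ≤ ∑ i ∈ Finset.Ioi z, lam i ^ 2 := by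
          calc (lam z) ^ 2 ≤ (lam ⟨1, hm2⟩) ^ 2 := by
                have h := pow_le_pow_left₀ (abs_nonneg (lam z)) habs 2
                rwa [sq_abs, sq_abs] at h
            _ ≤ ∑ i ∈ Finset.Ioi z, lam i ^ 2 :=
                Finset.single_le_sum (fun i _ => sq_nonneg (lam i)) hi1
        have hLt : |lam z| ≤ t := by
          rw [htdef, show |lam z| = Real.sqrt (|lam z| ^ 2) from
            (Real.sqrt_sq (abs_nonneg _)).symm]
          exact Real.sqrt_le_sqrt (by rw [sq_abs]; exact hsq2)
        have hls : |lam z| * s ≤ |lam z| := mul_le_of_le_one_right (abs_nonneg _) hs1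
        linarith
      · -- m = 1
        have hm1 : m = 1 := by omega
        have hsub : ∀ a b : β, a = b := by
          intro a b
          apply Subtype.ext; apply Fin.ext
          have ha := a.1.isLt; have hb := b.1.isLt
          omega
        have a : β := Classical.arbitrary _
        have huniv : (Finset.univ : Finset β) = {a} :=
          Finset.eq_singleton_iff_unique_mem.mpr ⟨Finset.mem_univ a, fun x _ => hsub x a⟩
        have hwv : (w ⬝ᵥ v0) ^ 2 = s := by
          have hv : v0 a * v0 a = 1 := by
            have h := hv01
            rw [dotProduct, huniv, Finset.sum_singleton] at h
            exact h
          have hw : w a * w a = s := by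
            rw [← hww, dotProduct, huniv, Finset.sum_singleton]
          rw [dotProduct, huniv, Finset.sum_singleton,
            show (w a * v0 a) ^ 2 = (w a * w a) * (v0 a * v0 a) from by ring, hv, hw, mul_one]
        have hmaxeq : lambdaMax (hX1h.submatrix f) = lam z * s := by
          rw [← hv02, hquad v0, hwv]
        have hσ1eq : σ1 = |lam z| * s := by
          rw [hσ1def, lambdaStar, hmaxeq, htrA1]
          rw [show ((lam z * s) ^ 2 + (lam z) ^ 2 * s ^ 2) / 2 = (|lam z| * s) ^ 2 by
            rw [mul_pow, mul_pow, sq_abs]; ring]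
          exact Real.sqrt_sq (mul_nonneg (abs_nonneg _) hs0)
        linarith [hlip2, hσ1eq]
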